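/- Let 𝒞 be a category with finite limits and binary coproducts such that both 𝒞 and its opposite category 𝒞^op are majority categories. Then 𝒞 is a preorder: for any objects X, Y and any two morphisms f, g : X → Y, one has f = g. -/

import Mathlib

open CategoryTheory CategoryTheory.Limits

/-- The triple of morphisms `(a, b, c)` is related by the ternary relation
`(r₁, r₂, r₃)`. -/
def TernaryRelated {C : Type*} [Category C] {R A B D S : C}
    (r₁ : R ⟶ A) (r₂ : R ⟶ B) (r₃ : R ⟶ D) (a : S ⟶ A) (b : S ⟶ B) (c : S ⟶ D) : Prop :=
  ∃ f : S ⟶ R, f ≫ r₁ = a ∧ f ≫ r₂ = b ∧ f ≫ r₃ = c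

/-- A category is a majority category when every (jointly monomorphic) internal ternary
relation is strictly closed with respect to the majority matrix. -/
def IsMajorityCategory (C : Type*) [Category C] : Prop :=
  ∀ ⦃A B D R : C⦄ (r₁ : R ⟶ A) (r₂ : R ⟶ B) (r₃ : R ⟶ D),
    (∀ ⦃S : C⦄ (f g : S ⟶ R),
      f ≫ r₁ = g ≫ r₁ → f ≫ r₂ = g ≫ r₂ → f ≫ r₃ = g ≫ r₃ → f = g) →
    ∀ ⦃S : C⦄ (a₁ a₂ : S ⟶ A) (b₁ b₂ : S ⟶ B) (c₁ c₂ : S ⟶ D),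
      TernaryRelated r₁ r₂ r₃ a₁ b₁ c₂ →
      TernaryRelated r₁ r₂ r₃ a₁ b₂ c₁ →
      TernaryRelated r₁ r₂ r₃ a₂ b₁ c₁ →
      TernaryRelated r₁ r₂ r₃ a₁ b₁ c₁

namespace MajorityPreorderAux

variable {C : Type*} [Category C] [HasFiniteLimits C] [HasBinaryCoproducts C]

/-- The codiagonal `Z ⨿ Z ⟶ Z`. -/
noncomputable def nab (Z : C) : Z ⨿ Z ⟶ Z := coprod.desc (𝟙 Z) (𝟙 Z)

@[simp] lemma inl_nab (Z : C) : (coprod.inl : Z ⟶ Z ⨿ Z) ≫ nab Z = 𝟙 Z := by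
  simp [nab, coprod.inl_desc]

@[simp] lemma inr_nab (Z : C) : (coprod.inr : Z ⟶ Z ⨿ Z) ≫ nab Z = 𝟙 Z := by
  simp [nab, coprod.inr_desc]

/-- The kernel pair of the codiagonal. -/
noncomputable def KK (Z : C) : C := pullback (nab Z) (nab Z)

noncomputable def k1 (Z : C) : KK Z ⟶ Z ⨿ Z := pullback.fst (nab Z) (nab Z)
noncomputable def k2 (Z : C) : KK Z ⟶ Z ⨿ Z := pullback.snd (nab Z) (nab Z)

lemma k_cond (Z : C) : k1 Z ≫ nab Z = k2 Z ≫ nab Z := pullback.condition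

/-- The wide kernel pullback of three copies of the codiagonal. -/
noncomputable def WW (Z : C) : C := pullback (k1 Z ≫ nab Z) (nab Z)

noncomputable def q1 (Z : C) : WW Z ⟶ KK Z := pullback.fst (k1 Z ≫ nab Z) (nab Z)
noncomputable def q2 (Z : C) : WW Z ⟶ Z ⨿ Z := pullback.snd (k1 Z ≫ nab Z) (nab Z)

noncomputable def Pa (Z : C) : WW Z ⟶ Z ⨿ Z := q1 Z ≫ k1 Z
noncomputable def Pb (Z : C) : WW Z ⟶ Z ⨿ Z := q1 Z ≫ k2 Z
noncomputable def Pc (Z : C) : WW Z ⟶ Z ⨿ Z := q2 Z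

lemma Pab (Z : C) : Pa Z ≫ nab Z = Pb Z ≫ nab Z := by
  simp only [Pa, Pb, Category.assoc, k_cond]

lemma Pac (Z : C) : Pa Z ≫ nab Z = Pc Z ≫ nab Z := by
  rw [Pa, Pc, Category.assoc]; exact (pullback.condition :
    q1 Z ≫ (k1 Z ≫ nab Z) = q2 Z ≫ nab Z)

lemma Pcb (Z : C) : Pc Z ≫ nab Z = Pa Z ≫ nab Z := (Pac Z).symm

/-- Lift into the kernel pair. -/
noncomputable def liftK (Z : C) {S : C} (α β : S ⟶ Z ⨿ Z)
    (h : α ≫ nab Z = β ≫ nab Z) : S ⟶ KK Z := pullback.lift α β h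

@[simp] lemma liftK_k1 (Z : C) {S : C} (α β : S ⟶ Z ⨿ Z) (h : α ≫ nab Z = β ≫ nab Z) :
    liftK Z α β h ≫ k1 Z = α := pullback.lift_fst _ _ _

@[simp] lemma liftK_k2 (Z : C) {S : C} (α β : S ⟶ Z ⨿ Z) (h : α ≫ nab Z = β ≫ nab Z) :
    liftK Z α β h ≫ k2 Z = β := pullback.lift_snd _ _ _

/-- Lift into the wide kernel pullback. -/
noncomputable def liftW (Z : C) {S : C} (α β γ : S ⟶ Z ⨿ Z)
    (hab : α ≫ nab Z = β ≫ nab Z) (hac : α ≫ nab Z = γ ≫ nab Z) : S ⟶ WW Z :=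
  pullback.lift (liftK Z α β hab) γ
    (by rw [← Category.assoc, liftK_k1]; exact hac)

@[simp] lemma liftW_Pa (Z : C) {S : C} (α β γ : S ⟶ Z ⨿ Z)
    (hab : α ≫ nab Z = β ≫ nab Z) (hac : α ≫ nab Z = γ ≫ nab Z) :
    liftW Z α β γ hab hac ≫ Pa Z = α := by
  rw [Pa, ← Category.assoc]
  rw [show liftW Z α β γ hab hac ≫ q1 Z = liftK Z α β hab from pullback.lift_fst _ _ _]
  simp

@[simp] lemma liftW_Pb (Z : C) {S : C} (α β γ : S ⟶ Z ⨿ Z)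
    (hab : α ≫ nab Z = β ≫ nab Z) (hac : α ≫ nab Z = γ ≫ nab Z) :
    liftW Z α β γ hab hac ≫ Pb Z = β := by
  rw [Pb, ← Category.assoc]
  rw [show liftW Z α β γ hab hac ≫ q1 Z = liftK Z α β hab from pullback.lift_fst _ _ _]
  simp

@[simp] lemma liftW_Pc (Z : C) {S : C} (α β γ : S ⟶ Z ⨿ Z)
    (hab : α ≫ nab Z = β ≫ nab Z) (hac : α ≫ nab Z = γ ≫ nab Z) :
    liftW Z α β γ hab hac ≫ Pc Z = γ := pullback.lift_snd _ _ _

/-- Maps into `WW Z` are determined by their three projections. -/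
lemma W_ext (Z : C) {S : C} {f g : S ⟶ WW Z}
    (ha : f ≫ Pa Z = g ≫ Pa Z) (hb : f ≫ Pb Z = g ≫ Pb Z) (hc : f ≫ Pc Z = g ≫ Pc Z) :
    f = g := by
  have hq1 : f ≫ q1 Z = g ≫ q1 Z := by
    apply pullback.hom_ext
    · exact (Category.assoc _ _ _).trans (ha.trans (Category.assoc _ _ _).symm)
    · exact (Category.assoc _ _ _).trans (hb.trans (Category.assoc _ _ _).symm)
  exact pullback.hom_ext hq1 hc

noncomputable def lam (Z : C) : KK Z ⟶ WW Z :=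
  liftW Z (k1 Z) (k2 Z) (k1 Z) (k_cond Z) rfl

noncomputable def mu (Z : C) : KK Z ⟶ WW Z :=
  liftW Z (k2 Z) (k1 Z) (k1 Z) (k_cond Z).symm (k_cond Z).symm

noncomputable def nu (Z : C) : KK Z ⟶ WW Z :=
  liftW Z (k1 Z) (k1 Z) (k2 Z) rfl (k_cond Z)

@[simp] lemma lam_Pa (Z : C) : lam Z ≫ Pa Z = k1 Z := liftW_Pa ..
@[simp] lemma lam_Pb (Z : C) : lam Z ≫ Pb Z = k2 Z := liftW_Pb ..
@[simp] lemma lam_Pc (Z : C) : lam Z ≫ Pc Z = k1 Z := liftW_Pc ..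
@[simp] lemma mu_Pa (Z : C) : mu Z ≫ Pa Z = k2 Z := liftW_Pa ..
@[simp] lemma mu_Pb (Z : C) : mu Z ≫ Pb Z = k1 Z := liftW_Pb ..
@[simp] lemma mu_Pc (Z : C) : mu Z ≫ Pc Z = k1 Z := liftW_Pc ..
@[simp] lemma nu_Pa (Z : C) : nu Z ≫ Pa Z = k1 Z := liftW_Pa ..
@[simp] lemma nu_Pb (Z : C) : nu Z ≫ Pb Z = k1 Z := liftW_Pb ..
@[simp] lemma nu_Pc (Z : C) : nu Z ≫ Pc Z = k2 Z := liftW_Pc ..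

noncomputable def yy (Z : C) : Z ⟶ KK Z :=
  liftK Z coprod.inl coprod.inr (by simp)

noncomputable def yy' (Z : C) : Z ⟶ KK Z :=
  liftK Z coprod.inr coprod.inl (by simp)

@[simp] lemma yy_k1 (Z : C) : yy Z ≫ k1 Z = coprod.inl := liftK_k1 ..
@[simp] lemma yy_k2 (Z : C) : yy Z ≫ k2 Z = coprod.inr := liftK_k2 ..
@[simp] lemma yy'_k1 (Z : C) : yy' Z ≫ k1 Z = coprod.inr := liftK_k1 ..
@[simp] lemma yy'_k2 (Z : C) : yy' Z ≫ k2 Z = coprod.inl := liftK_k2 ..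

/-- Key joint-epimorphism lemma, proved using majority of `C` applied to the
equalizer of `u` and `v` inside the wide kernel pullback. -/
lemma jointly_epi (Z : C) (hmaj : IsMajorityCategory C) {S : C} (u v : WW Z ⟶ S)
    (h1 : lam Z ≫ u = lam Z ≫ v) (h2 : mu Z ≫ u = mu Z ≫ v)
    (h3 : nu Z ≫ u = nu Z ≫ v) : u = v := by
  set e : equalizer u v ⟶ WW Z := equalizer.ι u v with he_def
  -- the relation (e ≫ Pa, e ≫ Pb, e ≫ Pc) is jointly monomorphic
  have jm : ∀ ⦃S' : C⦄ (f g : S' ⟶ equalizer u v),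
      f ≫ (e ≫ Pa Z) = g ≫ (e ≫ Pa Z) → f ≫ (e ≫ Pb Z) = g ≫ (e ≫ Pb Z) →
      f ≫ (e ≫ Pc Z) = g ≫ (e ≫ Pc Z) → f = g := by
    intro S' f g ha hb hc
    have : f ≫ e = g ≫ e := by
      apply W_ext Z
      · simpa only [Category.assoc] using ha
      · simpa only [Category.assoc] using hb
      · simpa only [Category.assoc] using hc
    exact (cancel_mono e).mp this
  -- rows
  have mkrow : ∀ (t : WW Z ⟶ KK Z) (w : KK Z ⟶ WW Z),
      w ≫ u = w ≫ v →
      TernaryRelated (e ≫ Pa Z) (e ≫ Pb Z) (e ≫ Pc Z)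
        (t ≫ w ≫ Pa Z) (t ≫ w ≫ Pb Z) (t ≫ w ≫ Pc Z) := by
    intro t w hw
    have hcomm : (t ≫ w) ≫ u = (t ≫ w) ≫ v := by
      rw [Category.assoc, Category.assoc, hw]
    refine ⟨equalizer.lift (t ≫ w) hcomm, ?_, ?_, ?_⟩ <;>
      · rw [← Category.assoc,
          show equalizer.lift (t ≫ w) hcomm ≫ e = t ≫ w from equalizer.lift_ι _ _,
          Category.assoc]
  have row1 := mkrow (liftK Z (Pa Z) (Pb Z) (Pab Z)) (lam Z) h1
  have row2 := mkrow (liftK Z (Pc Z) (Pa Z) (Pcb Z)) (mu Z) h2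
  have row3 := mkrow (liftK Z (Pb Z) (Pc Z) ((Pab Z).symm.trans (Pac Z))) (nu Z) h3
  simp only [lam_Pa, lam_Pb, lam_Pc, mu_Pa, mu_Pb, mu_Pc, nu_Pa, nu_Pb, nu_Pc,
    liftK_k1, liftK_k2] at row1 row2 row3
  -- row1 : related (Pa, Pb, Pa) ; row2 : related (Pa, Pc, Pc) ; row3 : related (Pb, Pb, Pc)
  obtain ⟨h, hha, hhb, hhc⟩ :=
    hmaj (e ≫ Pa Z) (e ≫ Pb Z) (e ≫ Pc Z) jm
      (Pa Z) (Pb Z) (Pb Z) (Pc Z) (Pc Z) (Pa Z) row1 row2 row3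
  have hid : h ≫ e = 𝟙 (WW Z) := by
    apply W_ext Z <;> simp only [Category.assoc, Category.id_comp]
    · simpa only [Category.assoc] using hha
    · simpa only [Category.assoc] using hhb
    · simpa only [Category.assoc] using hhc
  calc u = (h ≫ e) ≫ u := by rw [hid, Category.id_comp]
    _ = h ≫ (e ≫ u) := Category.assoc ..
    _ = h ≫ (e ≫ v) := by rw [equalizer.condition]
    _ = (h ≫ e) ≫ v := (Category.assoc ..).symm
    _ = v := by rw [hid, Category.id_comp]

/-- Using comajority on the jointly-epimorphic triple `(lam, mu, nu)` we produce a
"majority vote" morphism `Θ`. -/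
lemma exists_theta (Z : C) (hmaj : IsMajorityCategory C)
    (hcomaj : IsMajorityCategory Cᵒᵖ) :
    ∃ Θ : WW Z ⟶ Z ⨿ Z, lam Z ≫ Θ = k1 Z ∧ mu Z ≫ Θ = k1 Z ∧ nu Z ≫ Θ = k1 Z := by
  have jm : ∀ ⦃S : Cᵒᵖ⦄ (f g : S ⟶ Opposite.op (WW Z)),
      f ≫ (lam Z).op = g ≫ (lam Z).op → f ≫ (mu Z).op = g ≫ (mu Z).op →
      f ≫ (nu Z).op = g ≫ (nu Z).op → f = g := by
    intro S f g h1 h2 h3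
    apply Quiver.Hom.unop_inj
    apply jointly_epi Z hmaj
    · simpa using congrArg Quiver.Hom.unop h1
    · simpa using congrArg Quiver.Hom.unop h2
    · simpa using congrArg Quiver.Hom.unop h3
  have row1 : TernaryRelated (lam Z).op (mu Z).op (nu Z).op
      (k1 Z).op (k1 Z).op (k2 Z).op := by
    refine ⟨(Pc Z).op, ?_, ?_, ?_⟩ <;> rw [← op_comp] <;> congr 1 <;> simp
  have row2 : TernaryRelated (lam Z).op (mu Z).op (nu Z).op
      (k1 Z).op (k2 Z).op (k1 Z).op := by
    refine ⟨(Pa Z).op, ?_, ?_, ?_⟩ <;> rw [← op_comp] <;> congr 1 <;> simp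
  have row3 : TernaryRelated (lam Z).op (mu Z).op (nu Z).op
      (k2 Z).op (k1 Z).op (k1 Z).op := by
    refine ⟨(Pb Z).op, ?_, ?_, ?_⟩ <;> rw [← op_comp] <;> congr 1 <;> simp
  obtain ⟨F, h1, h2, h3⟩ :=
    hcomaj (lam Z).op (mu Z).op (nu Z).op jm
      (k1 Z).op (k2 Z).op (k1 Z).op (k2 Z).op (k1 Z).op (k2 Z).op row1 row2 row3
  refine ⟨F.unop, ?_, ?_, ?_⟩
  · simpa using congrArg Quiver.Hom.unop h1
  · simpa using congrArg Quiver.Hom.unop h2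
  · simpa using congrArg Quiver.Hom.unop h3

/-- The key degeneracy: the two coproduct injections agree. -/
lemma inl_eq_inr (Z : C) (hmaj : IsMajorityCategory C)
    (hcomaj : IsMajorityCategory Cᵒᵖ) :
    (coprod.inl : Z ⟶ Z ⨿ Z) = coprod.inr := by
  obtain ⟨Θ, hl, hm, hn⟩ := exists_theta Z hmaj hcomaj
  -- the relation (⟨Pa, Pc⟩, Pb, Θ)
  set r₁ : WW Z ⟶ (Z ⨿ Z) ⨯ (Z ⨿ Z) := prod.lift (Pa Z) (Pc Z) with hr₁
  have jm : ∀ ⦃S : C⦄ (f g : S ⟶ WW Z),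
      f ≫ r₁ = g ≫ r₁ → f ≫ Pb Z = g ≫ Pb Z → f ≫ Θ = g ≫ Θ → f = g := by
    intro S f g h1 h2 _
    have ha : f ≫ Pa Z = g ≫ Pa Z := by
      have := congrArg (fun t => t ≫ (prod.fst : (Z ⨿ Z) ⨯ (Z ⨿ Z) ⟶ Z ⨿ Z)) h1
      simpa [hr₁, prod.lift_fst] using this
    have hc : f ≫ Pc Z = g ≫ Pc Z := by
      have := congrArg (fun t => t ≫ (prod.snd : (Z ⨿ Z) ⨯ (Z ⨿ Z) ⟶ Z ⨿ Z)) h1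
      simpa [hr₁, prod.lift_snd] using this
    exact W_ext Z ha h2 hc
  -- rows
  have row1 : TernaryRelated r₁ (Pb Z) Θ
      (prod.lift coprod.inr coprod.inl) coprod.inr coprod.inr := by
    refine ⟨yy' Z ≫ nu Z, ?_, ?_, ?_⟩
    · rw [hr₁, prod.comp_lift]
      congr 1 <;> rw [Category.assoc] <;> simp
    · rw [Category.assoc]; simp
    · rw [Category.assoc, hn, yy'_k1]
  have row2 : TernaryRelated r₁ (Pb Z) Θ
      (prod.lift coprod.inr coprod.inl) coprod.inl coprod.inl := by
    refine ⟨yy Z ≫ mu Z, ?_, ?_, ?_⟩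
    · rw [hr₁, prod.comp_lift]
      congr 1 <;> rw [Category.assoc] <;> simp
    · rw [Category.assoc]; simp
    · rw [Category.assoc, hm, yy_k1]
  have row3 : TernaryRelated r₁ (Pb Z) Θ
      (prod.lift coprod.inl coprod.inl) coprod.inr coprod.inl := by
    refine ⟨yy Z ≫ lam Z, ?_, ?_, ?_⟩
    · rw [hr₁, prod.comp_lift]
      congr 1 <;> rw [Category.assoc] <;> simp
    · rw [Category.assoc]; simp
    · rw [Category.assoc, hl, yy_k1]
  obtain ⟨h, H1, H2, H3⟩ :=
    hmaj r₁ (Pb Z) Θ jm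
      (prod.lift coprod.inr coprod.inl) (prod.lift coprod.inl coprod.inl)
      coprod.inr coprod.inl coprod.inl coprod.inr row1 row2 row3
  -- h has the same projections as yy' ≫ nu, hence is equal to it
  have hPa : h ≫ Pa Z = coprod.inr := by
    have := congrArg (fun t => t ≫ (prod.fst : (Z ⨿ Z) ⨯ (Z ⨿ Z) ⟶ Z ⨿ Z)) H1
    simpa [hr₁, prod.lift_fst] using this
  have hPc : h ≫ Pc Z = coprod.inl := by
    have := congrArg (fun t => t ≫ (prod.snd : (Z ⨿ Z) ⨯ (Z ⨿ Z) ⟶ Z ⨿ Z)) H1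
    simpa [hr₁, prod.lift_snd] using this
  have heq : h = yy' Z ≫ nu Z := by
    apply W_ext Z
    · rw [hPa, Category.assoc]; simp
    · rw [H2, Category.assoc]; simp
    · rw [hPc, Category.assoc]; simp
  have : (yy' Z ≫ nu Z) ≫ Θ = coprod.inl := by rw [← heq, H3]
  rw [Category.assoc, hn, yy'_k1] at this
  exact this.symm

end MajorityPreorderAux

/-- A category with finite limits and binary coproducts such that both it and its
opposite are majority categories is a preorder. -/
theorem majority_and_comajority_preorder {C : Type*} [Category C]
    [HasFiniteLimits C] [HasBinaryCoproducts C]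
    (hmaj : IsMajorityCategory C) (hcomaj : IsMajorityCategory Cᵒᵖ) :
    ∀ {X Y : C} (f g : X ⟶ Y), f = g := by
  intro X Y f g
  have h := MajorityPreorderAux.inl_eq_inr X hmaj hcomaj
  calc f = coprod.inl ≫ coprod.desc f g := by simp [coprod.inl_desc]
    _ = coprod.inr ≫ coprod.desc f g := by rw [h]
    _ = g := by simp [coprod.inr_desc]
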